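/- Maximum principle for the one-dimensional operator with transmission conditions: suppose (f₋, f₊) belongs to D(A) and let M = max( sup_{x∈[a,0]} f₋(x), sup_{x∈[0,b]} f₊(x) ). If x₀ ∈ [a,0] and f₋(x₀) = M, then κ f₋''(x₀) ≤ 0; and if x₀ ∈ [0,b] and f₊(x₀) = M, then f₊''(x₀) ≤ 0. -/

import Mathlib

open Set

/-- One-sided first derivative on the interval `[a,b]`. -/
noncomputable def dIcc (a b : ℝ) (f : ℝ → ℝ) : ℝ → ℝ :=
  derivWithin f (Set.Icc a b)

/-- One-sided second derivative on the interval `[a,b]`. -/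
noncomputable def d2Icc (a b : ℝ) (f : ℝ → ℝ) : ℝ → ℝ :=
  derivWithin (derivWithin f (Set.Icc a b)) (Set.Icc a b)

open Filter Topology

/-- At an interior maximum, the one-sided derivative is zero. -/
lemma aux_deriv_zero_interior (c d : ℝ) (f : ℝ → ℝ) (x₀ : ℝ) (hx : x₀ ∈ Ioo c d)
    (hmax : ∀ x ∈ Icc c d, f x ≤ f x₀) : derivWithin f (Icc c d) x₀ = 0 := by
  have hnhds : Icc c d ∈ 𝓝 x₀ := Icc_mem_nhds hx.1 hx.2
  rw [derivWithin_of_mem_nhds hnhds]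
  exact IsLocalMax.deriv_eq_zero ((isMaxOn_iff.2 hmax).isLocalMax hnhds)

/-- At a maximum at the right endpoint, the one-sided derivative is nonnegative. -/
lemma aux_deriv_nonneg_right (c d : ℝ) (hcd : c < d) (f : ℝ → ℝ)
    (hf : ContDiffOn ℝ 2 f (Icc c d)) (hmax : ∀ x ∈ Icc c d, f x ≤ f d) :
    0 ≤ derivWithin f (Icc c d) d := by
  have hdiff : DifferentiableWithinAt ℝ f (Icc c d) d :=
    (hf.differentiableOn (by norm_num)) d (right_mem_Icc.2 hcd.le)
  have hslope : Tendsto (slope f d) (𝓝[Icc c d \ {d}] d) (𝓝 (derivWithin f (Icc c d) d)) :=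
    hasDerivWithinAt_iff_tendsto_slope.1 hdiff.hasDerivWithinAt
  have hsub : Ico c d ⊆ Icc c d \ {d} := fun y hy => ⟨⟨hy.1, hy.2.le⟩, ne_of_lt hy.2⟩
  have h1 : Tendsto (slope f d) (𝓝[<] d) (𝓝 (derivWithin f (Icc c d) d)) := by
    rw [← nhdsWithin_Ico_eq_nhdsLT hcd]
    exact hslope.mono_left (nhdsWithin_mono _ hsub)
  have hmem : ∀ᶠ y in 𝓝[<] d, y ∈ Ico c d := by
    rw [← nhdsWithin_Ico_eq_nhdsLT hcd]; exact self_mem_nhdsWithin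
  refine ge_of_tendsto h1 ?_
  filter_upwards [hmem] with y hy
  rw [slope_def_field]
  rw [show f y - f d = -(f d - f y) by ring, show y - d = -(d - y) by ring, neg_div_neg_eq]
  exact div_nonneg (by linarith [hmax y ⟨hy.1, hy.2.le⟩]) (by linarith [hy.2])

/-- At a maximum at the left endpoint, the one-sided derivative is nonpositive. -/
lemma aux_deriv_nonpos_left (c d : ℝ) (hcd : c < d) (f : ℝ → ℝ)
    (hf : ContDiffOn ℝ 2 f (Icc c d)) (hmax : ∀ x ∈ Icc c d, f x ≤ f c) :
    derivWithin f (Icc c d) c ≤ 0 := by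
  have hdiff : DifferentiableWithinAt ℝ f (Icc c d) c :=
    (hf.differentiableOn (by norm_num)) c (left_mem_Icc.2 hcd.le)
  have hslope : Tendsto (slope f c) (𝓝[Icc c d \ {c}] c) (𝓝 (derivWithin f (Icc c d) c)) :=
    hasDerivWithinAt_iff_tendsto_slope.1 hdiff.hasDerivWithinAt
  have hsub : Ioc c d ⊆ Icc c d \ {c} := fun y hy => ⟨⟨hy.1.le, hy.2⟩, (ne_of_gt hy.1)⟩
  have h1 : Tendsto (slope f c) (𝓝[>] c) (𝓝 (derivWithin f (Icc c d) c)) := by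
    rw [← nhdsWithin_Ioc_eq_nhdsGT hcd]
    exact hslope.mono_left (nhdsWithin_mono _ hsub)
  have hmem : ∀ᶠ y in 𝓝[>] c, y ∈ Ioc c d := by
    rw [← nhdsWithin_Ioc_eq_nhdsGT hcd]; exact self_mem_nhdsWithin
  refine le_of_tendsto h1 ?_
  filter_upwards [hmem] with y hy
  rw [slope_def_field]
  exact div_nonpos_of_nonpos_of_nonneg (by linarith [hmax y ⟨hy.1.le, hy.2⟩]) (by linarith [hy.1])

/-- Second-derivative test at a maximum point where the one-sided derivative vanishes. -/
lemma aux_second_deriv_nonpos (c d : ℝ) (hcd : c < d) (f : ℝ → ℝ)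
    (hf : ContDiffOn ℝ 2 f (Icc c d)) (x₀ : ℝ) (hx₀ : x₀ ∈ Icc c d)
    (hmax : ∀ x ∈ Icc c d, f x ≤ f x₀)
    (hd1 : derivWithin f (Icc c d) x₀ = 0) :
    derivWithin (derivWithin f (Icc c d)) (Icc c d) x₀ ≤ 0 := by
  by_contra hpos
  push_neg at hpos
  set g := derivWithin f (Icc c d) with hg
  set c₂ := derivWithin g (Icc c d) x₀ with hc2
  have hUD := uniqueDiffOn_Icc hcd
  have hg1 : ContDiffOn ℝ 1 g (Icc c d) := hf.derivWithin hUD (by norm_num)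
  have hgd : HasDerivWithinAt g c₂ (Icc c d) x₀ :=
    ((hg1.differentiableOn one_ne_zero) x₀ hx₀).hasDerivWithinAt
  have hslope : Tendsto (slope g x₀) (𝓝[Icc c d \ {x₀}] x₀) (𝓝 c₂) :=
    hasDerivWithinAt_iff_tendsto_slope.1 hgd
  rcases lt_or_eq_of_le hx₀.2 with hlt | heq
  · -- x₀ < d : g > 0 just to the right of x₀, so f increases, contradiction
    have hsub : Ioc x₀ d ⊆ Icc c d \ {x₀} := fun y hy =>
      ⟨⟨le_trans hx₀.1 hy.1.le, hy.2⟩, ne_of_gt hy.1⟩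
    have h1 : Tendsto (slope g x₀) (𝓝[>] x₀) (𝓝 c₂) := by
      rw [← nhdsWithin_Ioc_eq_nhdsGT hlt]
      exact hslope.mono_left (nhdsWithin_mono _ hsub)
    have hmem : ∀ᶠ y in 𝓝[>] x₀, y ∈ Ioc x₀ d := by
      rw [← nhdsWithin_Ioc_eq_nhdsGT hlt]; exact self_mem_nhdsWithin
    have hev : ∀ᶠ y in 𝓝[>] x₀, 0 < g y ∧ y ∈ Ioc x₀ d := by
      filter_upwards [h1.eventually (eventually_gt_nhds hpos), hmem] with y hy2 hy3
      refine ⟨?_, hy3⟩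
      have hs : slope g x₀ y = g y / (y - x₀) := by rw [slope_def_field, hd1, sub_zero]
      have hyx : 0 < y - x₀ := by linarith [hy3.1]
      have := mul_pos (hs ▸ hy2) hyx
      rwa [div_mul_cancel₀ _ (ne_of_gt hyx)] at this
    obtain ⟨u, hu, husub⟩ := mem_nhdsGT_iff_exists_Ioc_subset.1 hev
    set x₁ := min u ((x₀ + d) / 2) with hx₁
    have hux : x₀ < u := hu
    have h01 : x₀ < x₁ := lt_min hux (by linarith)
    have h1d : x₁ < d := lt_of_le_of_lt (min_le_right _ _) (by linarith)
    have hIsub : Icc x₀ x₁ ⊆ Icc c d := Icc_subset_Icc hx₀.1 h1d.le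
    have hmono : StrictMonoOn f (Icc x₀ x₁) := by
      apply strictMonoOn_of_deriv_pos (convex_Icc _ _) (hf.continuousOn.mono hIsub)
      intro y hy
      rw [interior_Icc] at hy
      have hyd : Icc c d ∈ 𝓝 y :=
        Icc_mem_nhds (lt_of_le_of_lt hx₀.1 hy.1) (hy.2.trans h1d)
      rw [← derivWithin_of_mem_nhds hyd]
      exact (husub ⟨hy.1, hy.2.le.trans (min_le_left _ _)⟩).1
    have := hmono (left_mem_Icc.2 h01.le) (right_mem_Icc.2 h01.le) h01
    have := hmax x₁ (hIsub (right_mem_Icc.2 h01.le))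
    linarith
  · -- x₀ = d : g < 0 just to the left of x₀, so f decreases, contradiction
    have hcx : c < x₀ := heq ▸ hcd
    have hsub : Ico c x₀ ⊆ Icc c d \ {x₀} := fun y hy =>
      ⟨⟨hy.1, hy.2.le.trans hx₀.2⟩, ne_of_lt hy.2⟩
    have h1 : Tendsto (slope g x₀) (𝓝[<] x₀) (𝓝 c₂) := by
      rw [← nhdsWithin_Ico_eq_nhdsLT hcx]
      exact hslope.mono_left (nhdsWithin_mono _ hsub)
    have hmem : ∀ᶠ y in 𝓝[<] x₀, y ∈ Ico c x₀ := by
      rw [← nhdsWithin_Ico_eq_nhdsLT hcx]; exact self_mem_nhdsWithin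
    have hev : ∀ᶠ y in 𝓝[<] x₀, g y < 0 ∧ y ∈ Ico c x₀ := by
      filter_upwards [h1.eventually (eventually_gt_nhds hpos), hmem] with y hy2 hy3
      refine ⟨?_, hy3⟩
      have hs : slope g x₀ y = g y / (y - x₀) := by rw [slope_def_field, hd1, sub_zero]
      have hyx : y - x₀ < 0 := by linarith [hy3.2]
      rcases div_pos_iff.1 (hs ▸ hy2) with ⟨_, h'⟩ | ⟨h, _⟩
      · linarith
      · exact h
    obtain ⟨l, hl, hlsub⟩ := mem_nhdsLT_iff_exists_Ico_subset.1 hev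
    set x₁ := max l ((c + x₀) / 2) with hx₁
    have hlx : l < x₀ := hl
    have h01 : x₁ < x₀ := max_lt hlx (by linarith)
    have hc1 : c < x₁ := lt_of_lt_of_le (by linarith) (le_max_right _ _)
    have hIsub : Icc x₁ x₀ ⊆ Icc c d := Icc_subset_Icc hc1.le hx₀.2
    have hanti : StrictAntiOn f (Icc x₁ x₀) := by
      apply strictAntiOn_of_deriv_neg (convex_Icc _ _) (hf.continuousOn.mono hIsub)
      intro y hy
      rw [interior_Icc] at hy
      have hyd : Icc c d ∈ 𝓝 y :=
        Icc_mem_nhds (hc1.trans hy.1) (lt_of_lt_of_le hy.2 (heq ▸ le_refl d))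
      rw [← derivWithin_of_mem_nhds hyd]
      exact (hlsub ⟨(le_max_left _ _).trans hy.1.le, hy.2⟩).1
    have := hanti (left_mem_Icc.2 h01.le) (right_mem_Icc.2 h01.le) h01
    have := hmax x₁ (hIsub (left_mem_Icc.2 h01.le))
    linarith

/-- Maximum principle for the one-dimensional operator with transmission conditions. -/
theorem maximum_principle_transmission_1D
    (a b κ α β : ℝ) (ha : a < 0) (hb : 0 < b) (hκ : 0 < κ)
    (hα : 0 ≤ α) (hβ : 0 ≤ β)
    (fm fp : ℝ → ℝ)
    (hfm : ContDiffOn ℝ 2 fm (Icc a 0)) (hfp : ContDiffOn ℝ 2 fp (Icc 0 b))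
    (hbc1 : dIcc a 0 fm a = 0) (hbc2 : dIcc 0 b fp b = 0)
    (htrp : dIcc 0 b fp 0 = α * (fp 0 - fm 0))
    (htrm : dIcc a 0 fm 0 = β * (fp 0 - fm 0))
    (M : ℝ) (hM : M = max (sSup (fm '' Icc a 0)) (sSup (fp '' Icc 0 b))) :
    (∀ x₀ ∈ Icc a 0, fm x₀ = M → κ * d2Icc a 0 fm x₀ ≤ 0) ∧
    (∀ x₀ ∈ Icc 0 b, fp x₀ = M → d2Icc 0 b fp x₀ ≤ 0) := by
  have hbdm : BddAbove (fm '' Icc a 0) :=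
    (isCompact_Icc.image_of_continuousOn hfm.continuousOn).bddAbove
  have hbdp : BddAbove (fp '' Icc 0 b) :=
    (isCompact_Icc.image_of_continuousOn hfp.continuousOn).bddAbove
  have hbm : ∀ x ∈ Icc a 0, fm x ≤ M := fun x hx => by
    rw [hM]
    exact le_trans (le_csSup hbdm (mem_image_of_mem _ hx)) (le_max_left _ _)
  have hbp : ∀ x ∈ Icc 0 b, fp x ≤ M := fun x hx => by
    rw [hM]
    exact le_trans (le_csSup hbdp (mem_image_of_mem _ hx)) (le_max_right _ _)
  constructor
  · intro x₀ hx₀ hfx₀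
    have hmaxm : ∀ x ∈ Icc a 0, fm x ≤ fm x₀ := fun x hx => hfx₀ ▸ hbm x hx
    have hd1 : derivWithin fm (Icc a 0) x₀ = 0 := by
      rcases eq_or_lt_of_le hx₀.1 with h | h
      · rw [← h]; exact hbc1
      · rcases lt_or_eq_of_le hx₀.2 with h2 | h2
        · exact aux_deriv_zero_interior a 0 fm x₀ ⟨h, h2⟩ hmaxm
        · rw [h2] at hmaxm hfx₀ ⊢
          refine le_antisymm ?_ (aux_deriv_nonneg_right a 0 ha fm hfm hmaxm)
          have hfp0 : fp 0 ≤ fm 0 := hfx₀ ▸ hbp 0 ⟨le_refl 0, hb.le⟩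
          rw [show derivWithin fm (Icc a 0) 0 = dIcc a 0 fm 0 from rfl, htrm]
          exact mul_nonpos_of_nonneg_of_nonpos hβ (by linarith)
    exact mul_nonpos_of_nonneg_of_nonpos hκ.le
      (aux_second_deriv_nonpos a 0 ha fm hfm x₀ hx₀ hmaxm hd1)
  · intro x₀ hx₀ hfx₀
    have hmaxp : ∀ x ∈ Icc 0 b, fp x ≤ fp x₀ := fun x hx => hfx₀ ▸ hbp x hx
    have hd1 : derivWithin fp (Icc 0 b) x₀ = 0 := by
      rcases eq_or_lt_of_le hx₀.1 with h | h
      · rw [← h] at hmaxp hfx₀ ⊢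
        refine le_antisymm (aux_deriv_nonpos_left 0 b hb fp hfp hmaxp) ?_
        have hfm0 : fm 0 ≤ fp 0 := hfx₀ ▸ hbm 0 ⟨ha.le, le_refl 0⟩
        rw [show derivWithin fp (Icc 0 b) 0 = dIcc 0 b fp 0 from rfl, htrp]
        exact mul_nonneg hα (by linarith)
      · rcases lt_or_eq_of_le hx₀.2 with h2 | h2
        · exact aux_deriv_zero_interior 0 b fp x₀ ⟨h, h2⟩ hmaxp
        · rw [h2]; exact hbc2
    exact aux_second_deriv_nonpos 0 b hb fp hfp x₀ hx₀ hmaxp hd1
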